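/- Let (Ω, 𝔄) be a measurable space, σ a finite positive semidefinite q×q matrix measure on it, and f ∈ L¹(σ) a complex-valued measurable function. Then the column space of ∫_Ω f dσ is contained in the column space of σ(Ω), and the null space of σ(Ω) is contained in the null space of ∫_Ω f dσ. -/

import Mathlib

open Matrix Complex MeasureTheory Filter
open scoped ComplexOrder

/-- The "imaginary part" of a complex square matrix: `Im M = (M - M*)/(2i)`. -/
noncomputable def mIm {q : ℕ} (M : Matrix (Fin q) (Fin q) ℂ) : Matrix (Fin q) (Fin q) ℂ :=
  ((2 : ℂ) * Complex.I)⁻¹ • (M - Mᴴ)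

/-- The "real part" of a complex square matrix: `Re M = (M + M*)/2`. -/
noncomputable def mRe {q : ℕ} (M : Matrix (Fin q) (Fin q) ℂ) : Matrix (Fin q) (Fin q) ℂ :=
  ((2 : ℂ))⁻¹ • (M + Mᴴ)

private lemma mulVec_int {q : ℕ} {Ω : Type*} [MeasurableSpace Ω] (τ : Measure Ω)
    (h : Ω → Matrix (Fin q) (Fin q) ℂ) (hint : ∀ j k, Integrable (fun ω => h ω j k) τ)
    (x : Fin q → ℂ) (j : Fin q) :
    ((Matrix.of fun j k => ∫ ω, h ω j k ∂τ) *ᵥ x) j = ∫ ω, (h ω *ᵥ x) j ∂τ := by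
  simp only [Matrix.mulVec, dotProduct, Matrix.of_apply]
  rw [integral_finset_sum _ (fun k _ => (hint j k).mul_const _)]
  exact Finset.sum_congr rfl fun k _ => (integral_mul_const _ _).symm

private lemma ae_mulVec_zero {q : ℕ} {Ω : Type*} [MeasurableSpace Ω] (τ : Measure Ω)
    (d : Ω → Matrix (Fin q) (Fin q) ℂ)
    (hdpsd : ∀ ω, (d ω).PosSemidef)
    (hdint : ∀ j k, Integrable (fun ω => d ω j k) τ)
    (x : Fin q → ℂ)
    (hx : (Matrix.of fun j k => ∫ ω, d ω j k ∂τ : Matrix (Fin q) (Fin q) ℂ) *ᵥ x = 0) :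
    ∀ᵐ ω ∂τ, d ω *ᵥ x = 0 := by
  set g : Ω → ℂ := fun ω => star x ⬝ᵥ (d ω *ᵥ x) with hg
  have hmvint : ∀ j, Integrable (fun ω => (d ω *ᵥ x) j) τ := by
    intro j
    simp only [Matrix.mulVec, dotProduct]
    exact integrable_finset_sum _ fun k _ => (hdint j k).mul_const _
  have hgint : Integrable g τ := by
    simp only [hg, dotProduct]
    exact integrable_finset_sum _ fun j _ => ((hmvint j).const_mul _)
  have hgnn : ∀ ω, 0 ≤ g ω := fun ω => (hdpsd ω).dotProduct_mulVec_nonneg x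
  have hgre : ∀ ω, g ω = ((g ω).re : ℂ) := by
    intro ω
    obtain ⟨-, him⟩ := Complex.nonneg_iff.mp (hgnn ω)
    exact (Complex.ext rfl him.symm)
  have hint0 : ∫ ω, g ω ∂τ = 0 := by
    have : ∫ ω, g ω ∂τ = star x ⬝ᵥ ((Matrix.of fun j k => ∫ ω, d ω j k ∂τ :
        Matrix (Fin q) (Fin q) ℂ) *ᵥ x) := by
      simp only [hg, dotProduct]
      rw [integral_finset_sum _ fun j _ => (hmvint j).const_mul _]
      refine Finset.sum_congr rfl fun j _ => ?_
      rw [mulVec_int τ d hdint x j, integral_const_mul]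
    rw [this, hx, dotProduct_zero]
  set gr : Ω → ℝ := fun ω => (g ω).re with hgr
  have hgrnn : 0 ≤ gr := fun ω => (Complex.nonneg_iff.mp (hgnn ω)).1
  have hgrint : Integrable gr τ := hgint.re
  have hgr0 : ∫ ω, gr ω ∂τ = 0 := by
    have h2 := integral_re (𝕜 := ℂ) hgint
    rw [hint0] at h2
    simpa [RCLike.re_to_complex] using h2
  have hae : gr =ᵐ[τ] 0 := (integral_eq_zero_iff_of_nonneg hgrnn hgrint).mp hgr0
  filter_upwards [hae] with ω hω
  have hω0 : (g ω).re = 0 := by simpa using hω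
  have hg0 : g ω = 0 := by rw [hgre ω, hω0]; simp
  exact ((hdpsd ω).dotProduct_mulVec_zero_iff x).mp hg0

theorem stmt6 {q : ℕ} {Ω : Type*} [MeasurableSpace Ω]
    (τ : Measure Ω) [IsFiniteMeasure τ]
    (d : Ω → Matrix (Fin q) (Fin q) ℂ)
    (hdmeas : ∀ j k : Fin q, Measurable fun ω => d ω j k)
    (hdpsd : ∀ ω, (d ω).PosSemidef)
    (hdint : ∀ j k, Integrable (fun ω => d ω j k) τ)
    (f : Ω → ℂ) (hfmeas : Measurable f)
    (hfint : ∀ j k, Integrable (fun ω => f ω * d ω j k) τ) :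
    LinearMap.range (Matrix.of fun j k => ∫ ω, f ω * d ω j k ∂τ).mulVecLin ≤
      LinearMap.range (Matrix.of fun j k => ∫ ω, d ω j k ∂τ : Matrix (Fin q) (Fin q) ℂ).mulVecLin
    ∧ LinearMap.ker (Matrix.of fun j k => ∫ ω, d ω j k ∂τ : Matrix (Fin q) (Fin q) ℂ).mulVecLin ≤
      LinearMap.ker (Matrix.of fun j k => ∫ ω, f ω * d ω j k ∂τ).mulVecLin := by
  set S : Matrix (Fin q) (Fin q) ℂ := Matrix.of fun j k => ∫ ω, d ω j k ∂τ with hSdef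
  set F : Matrix (Fin q) (Fin q) ℂ := Matrix.of fun j k => ∫ ω, f ω * d ω j k ∂τ with hFdef
  have hherm : ∀ ω, (d ω).IsHermitian := fun ω => (hdpsd ω).1
  -- S is Hermitian
  have hSherm : Sᴴ = S := by
    ext j k
    simp only [hSdef, Matrix.conjTranspose_apply, Matrix.of_apply, RCLike.star_def]
    rw [← integral_conj]
    refine integral_congr_ae (Eventually.of_forall fun ω => ?_)
    simpa using congrFun (congrFun (hherm ω) j) k
  -- kernel containment: S *ᵥ x = 0 → F *ᵥ x = 0
  have hkerF : ∀ x : Fin q → ℂ, S *ᵥ x = 0 → F *ᵥ x = 0 := by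
    intro x hx
    have hae := ae_mulVec_zero τ d hdpsd hdint x hx
    funext j
    have hfmv : ∀ j, Integrable (fun ω => f ω * (d ω *ᵥ x) j) τ := by
      intro j
      have : (fun ω => f ω * (d ω *ᵥ x) j) =
          fun ω => ∑ k, (f ω * d ω j k) * x k := by
        funext ω
        simp only [Matrix.mulVec, dotProduct, Finset.mul_sum]
        exact Finset.sum_congr rfl fun k _ => by ring
      rw [this]
      exact integrable_finset_sum _ fun k _ => (hfint j k).mul_const _
    have h1 : (F *ᵥ x) j = ∫ ω, f ω * (d ω *ᵥ x) j ∂τ := by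
      have h0 := mulVec_int τ (fun ω => Matrix.of fun j k => f ω * d ω j k) hfint x j
      simp only [Matrix.of_apply] at h0
      rw [hFdef]
      refine h0.trans (integral_congr_ae (Eventually.of_forall fun ω => ?_))
      simp only [Matrix.mulVec, dotProduct, Matrix.of_apply, Finset.mul_sum]
      exact Finset.sum_congr rfl fun k _ => mul_assoc _ _ _
    rw [h1]
    have : ∀ᵐ ω ∂τ, f ω * (d ω *ᵥ x) j = 0 := by
      filter_upwards [hae] with ω hω
      rw [hω]; simp
    simpa using integral_congr_ae this
  -- S *ᵥ x = 0 → Fᴴ *ᵥ x = 0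
  have hkerFH : ∀ x : Fin q → ℂ, S *ᵥ x = 0 → Fᴴ *ᵥ x = 0 := by
    intro x hx
    have hae := ae_mulVec_zero τ d hdpsd hdint x hx
    have hFH : Fᴴ = Matrix.of fun j k => ∫ ω, (starRingEnd ℂ) (f ω) * d ω j k ∂τ := by
      ext j k
      simp only [hFdef, Matrix.conjTranspose_apply, Matrix.of_apply, RCLike.star_def]
      rw [← integral_conj]
      refine integral_congr_ae (Eventually.of_forall fun ω => ?_)
      have hd : (starRingEnd ℂ) (d ω k j) = d ω j k := by
        simpa using congrFun (congrFun (hherm ω) j) k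
      simp [_root_.map_mul, hd]
    have hcint : ∀ j k, Integrable (fun ω => (starRingEnd ℂ) (f ω) * d ω j k) τ := by
      intro j k
      have : (fun ω => (starRingEnd ℂ) (f ω) * d ω j k) =
          fun ω => star (f ω * d ω k j) := by
        funext ω
        have hd : (starRingEnd ℂ) (d ω k j) = d ω j k := by
          simpa using congrFun (congrFun (hherm ω) j) k
        simp only [RCLike.star_def, _root_.map_mul, hd]
      rw [this]
      have h2 := ContinuousLinearMap.integrable_comp
        (Complex.conjCLE.toContinuousLinearMap) (hfint k j)
      simpa using h2
    funext j
    have h1 : (Fᴴ *ᵥ x) j = ∫ ω, (starRingEnd ℂ) (f ω) * (d ω *ᵥ x) j ∂τ := by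
      have h0 := mulVec_int τ (fun ω => Matrix.of fun j k => (starRingEnd ℂ) (f ω) * d ω j k)
        hcint x j
      simp only [Matrix.of_apply] at h0
      rw [hFH]
      refine h0.trans (integral_congr_ae (Eventually.of_forall fun ω => ?_))
      simp only [Matrix.mulVec, dotProduct, Matrix.of_apply, Finset.mul_sum]
      exact Finset.sum_congr rfl fun k _ => mul_assoc _ _ _
    rw [h1]
    have : ∀ᵐ ω ∂τ, (starRingEnd ℂ) (f ω) * (d ω *ᵥ x) j = 0 := by
      filter_upwards [hae] with ω hω
      rw [hω]; simp
    simpa using integral_congr_ae this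
  -- decomposition ℂ^q = range S ⊔ ker S
  set R := LinearMap.range S.mulVecLin with hR
  set K := LinearMap.ker S.mulVecLin with hK
  have hinf : R ⊓ K = ⊥ := by
    rw [eq_bot_iff]
    rintro v ⟨⟨u, rfl⟩, hv2⟩
    have hv2' : S *ᵥ (S.mulVecLin u) = 0 := hv2
    have h0 : star (S.mulVecLin u) ⬝ᵥ (S.mulVecLin u) = 0 := by
      simp only [Matrix.mulVecLin_apply] at hv2' ⊢
      rw [Matrix.star_mulVec, ← Matrix.dotProduct_mulVec, hSherm, hv2',
        dotProduct_zero]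
    simpa [Submodule.mem_bot] using dotProduct_star_self_eq_zero.mp h0
  have hfr : Module.finrank ℂ R + Module.finrank ℂ K = q := by
    have := LinearMap.finrank_range_add_finrank_ker S.mulVecLin
    simpa [Module.finrank_fin_fun] using this
  have hsup : R ⊔ K = ⊤ := by
    apply Submodule.eq_top_of_finrank_eq
    have h2 := Submodule.finrank_sup_add_finrank_inf_eq R K
    rw [hinf, finrank_bot, add_zero] at h2
    rw [h2, hfr, Module.finrank_fin_fun]
  constructor
  · rintro y ⟨x, rfl⟩
    have hy : F.mulVecLin x ∈ R ⊔ K := hsup ▸ Submodule.mem_top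
    obtain ⟨s, hs, k, hk, hsk⟩ := Submodule.mem_sup.mp hy
    have hkS : S *ᵥ k = 0 := hk
    have hks : star k ⬝ᵥ s = 0 := by
      obtain ⟨u, rfl⟩ := hs
      have hSk : star k ᵥ* S = 0 := by
        have h1 : star (Sᴴ *ᵥ k) = star k ᵥ* S := by
          rw [Matrix.star_mulVec, Matrix.conjTranspose_conjTranspose]
        rw [← h1, hSherm, hkS]
        simp
      simp only [Matrix.mulVecLin_apply]
      rw [Matrix.dotProduct_mulVec, hSk, zero_dotProduct]
    have hkv : star k ⬝ᵥ (F.mulVecLin x) = 0 := by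
      have hFk : star k ᵥ* F = 0 := by
        have h1 : star (Fᴴ *ᵥ k) = star k ᵥ* F := by
          rw [Matrix.star_mulVec, Matrix.conjTranspose_conjTranspose]
        rw [← h1, hkerFH k hkS]
        simp
      simp only [Matrix.mulVecLin_apply]
      rw [Matrix.dotProduct_mulVec, hFk, zero_dotProduct]
    have hkk : star k ⬝ᵥ k = 0 := by
      have := hkv
      rw [← hsk, dotProduct_add, hks, zero_add] at this
      exact this
    have hk0 : k = 0 := dotProduct_star_self_eq_zero.mp hkk
    rw [← hsk, hk0, add_zero]
    exact hs
  · intro x hx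
    have hxS : S *ᵥ x = 0 := hx
    exact hkerF x hxS
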